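/- Let E be a real Banach space, f : E → E, y₀ ∈ E, h₀ > 0, and let y : ℝ → E satisfy y(0) = y₀ and y′(t) = f(y(t)) for all t in a neighborhood of [0, h₀]. Assume that the map t ↦ f(y(t)) is the sum of a power series centered at 0 with radius of convergence strictly greater than h₀. For h ∈ (0, h₀] define the Fourier coefficients γ_j(y) = ∫_0^1 P_j(τ) f(y(τh)) dτ. Then for every j ≥ 0 there exists C > 0 such that ‖γ_j(y)‖ ≤ C h^j for all h ∈ (0, h₀]. -/

import Mathlib

/-- The shifted and scaled Legendre polynomial on `[0,1]`, via Rodrigues' formula: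
`P_j(x) = (√(2j+1)/j!) (d/dx)^j [(x² - x)^j]`. -/
noncomputable def legendreP (j : ℕ) : ℝ → ℝ :=
  fun x => (Real.sqrt (2 * (j : ℝ) + 1) / (Nat.factorial j : ℝ)) *
    iteratedDeriv j (fun y : ℝ => (y ^ 2 - y) ^ j) x

open Polynomial in
lemma iteratedDeriv_polyeval (q : Polynomial ℝ) (n : ℕ) :
    iteratedDeriv n (fun x => q.eval x) = fun x => (derivative^[n] q).eval x := by
  induction n with
  | zero => simp
  | succ n ih =>
    rw [iteratedDeriv_succ, ih, Function.iterate_succ_apply']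
    funext x
    exact (Polynomial.hasDerivAt _ x).deriv

open Polynomial in
lemma legendreP_eq (j : ℕ) : legendreP j =
    fun x => (Real.sqrt (2 * (j : ℝ) + 1) / (Nat.factorial j : ℝ)) *
      (derivative^[j] ((X ^ 2 - X : ℝ[X]) ^ j)).eval x := by
  have h : (fun y : ℝ => (y ^ 2 - y) ^ j) = fun y => ((X ^ 2 - X : ℝ[X]) ^ j).eval y := by
    funext y; simp
  funext x
  rw [legendreP, h, iteratedDeriv_polyeval]

lemma legendreP_continuous (j : ℕ) : Continuous (legendreP j) := by
  rw [legendreP_eq]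
  exact continuous_const.mul (Polynomial.continuous _)

open Polynomial in
lemma rodrigues_boundary (j m : ℕ) (hm : m < j) (t : ℝ) (ht : t = 0 ∨ t = 1) :
    (derivative^[m] ((X ^ 2 - X : ℝ[X]) ^ j)).eval t = 0 := by
  have hne : ((X ^ 2 - X : ℝ[X]) ^ j) ≠ 0 := by
    apply pow_ne_zero
    intro h
    have := congrArg (Polynomial.eval (2:ℝ)) h
    simp at this; norm_num at this
  have hdvd : (X - C t) ^ j ∣ (X ^ 2 - X : ℝ[X]) ^ j := by
    apply pow_dvd_pow_of_dvd
    rcases ht with h | h <;> subst h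
    · exact ⟨X - 1, by rw [Polynomial.C_0]; ring⟩
    · exact ⟨X, by rw [Polynomial.C_1]; ring⟩
  have hroot : j ≤ ((X ^ 2 - X : ℝ[X]) ^ j).rootMultiplicity t :=
    (Polynomial.le_rootMultiplicity_iff hne).2 hdvd
  exact Polynomial.isRoot_iterate_derivative_of_lt_rootMultiplicity (hm.trans_le hroot)

open Polynomial in
lemma orth_aux (j : ℕ) : ∀ n : ℕ, ∀ m : ℕ, ∀ u : ℝ[X], n ≤ m → m ≤ j →
    derivative^[n] u = 0 →
    ∫ x in (0:ℝ)..1, u.eval x * (derivative^[m] ((X ^ 2 - X : ℝ[X]) ^ j)).eval x = 0 := by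
  intro n
  induction n with
  | zero =>
    intro m u _ _ hu
    simp at hu; simp [hu]
  | succ n ih =>
    intro m u hnm hmj hu
    obtain ⟨m, rfl⟩ : ∃ m', m = m' + 1 := ⟨m - 1, by omega⟩
    have key : ∫ x in (0:ℝ)..1,
        u.eval x * (derivative^[m+1] ((X ^ 2 - X : ℝ[X]) ^ j)).eval x
        = - ∫ x in (0:ℝ)..1,
        (derivative u).eval x * (derivative^[m] ((X ^ 2 - X : ℝ[X]) ^ j)).eval x := by
      have hparts := intervalIntegral.integral_mul_deriv_eq_deriv_mul
        (u := fun x => u.eval x) (u' := fun x => (derivative u).eval x)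
        (v := fun x => (derivative^[m] ((X ^ 2 - X : ℝ[X]) ^ j)).eval x)
        (v' := fun x => (derivative^[m+1] ((X ^ 2 - X : ℝ[X]) ^ j)).eval x)
        (a := 0) (b := 1)
        (fun x _ => u.hasDerivAt x)
        (fun x _ => by
          simpa [Function.iterate_succ_apply'] using
            (derivative^[m] ((X ^ 2 - X : ℝ[X]) ^ j)).hasDerivAt x)
        ((Polynomial.continuous _).intervalIntegrable 0 1)
        ((Polynomial.continuous _).intervalIntegrable 0 1)
      rw [hparts]
      have h1 := rodrigues_boundary j m (by omega) 1 (Or.inr rfl)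
      have h0 := rodrigues_boundary j m (by omega) 0 (Or.inl rfl)
      simp only [h1, h0, mul_zero]
      ring
    rw [key, ih m (derivative u) (by omega) (by omega)
      (by rw [← Function.iterate_succ_apply]; exact hu), neg_zero]

/-- Orthogonality of `legendreP j` against monomials of degree `< j`. -/
lemma legendreP_orth (j k : ℕ) (hk : k < j) :
    ∫ x in (0:ℝ)..1, legendreP j x * x ^ k = 0 := by
  have : ∀ x : ℝ, legendreP j x * x ^ k
      = (Real.sqrt (2 * (j : ℝ) + 1) / (Nat.factorial j : ℝ)) *
        ((Polynomial.X ^ k : Polynomial ℝ).eval x *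
          (Polynomial.derivative^[j] ((Polynomial.X ^ 2 - Polynomial.X : Polynomial ℝ) ^ j)).eval x) := by
    intro x; rw [legendreP_eq]; simp only [Polynomial.eval_pow, Polynomial.eval_X]; ring
  simp_rw [this]
  rw [intervalIntegral.integral_const_mul,
    orth_aux j (k+1) j (Polynomial.X ^ k) (by omega) le_rfl
      (Polynomial.iterate_derivative_eq_zero (by simp)),
    mul_zero]

/-- Corollary 2.2: if `y` solves `ẏ = f(y)`, `y(0) = y₀` near `[0, h₀]` and `t ↦ f(y(t))`
is the sum of a power series centered at `0` with radius of convergence `> h₀`, then the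
Fourier coefficients `γ_j(y) = ∫_0^1 P_j(τ) f(y(τh)) dτ` satisfy `γ_j(y) = O(h^j)`. -/
theorem fourier_coeff_isBigO
    {E : Type*} [NormedAddCommGroup E] [NormedSpace ℝ E] [CompleteSpace E]
    (f : E → E) (y₀ : E) (h₀ : ℝ) (hh₀ : 0 < h₀) (y : ℝ → E)
    (hy0 : y 0 = y₀)
    (U : Set ℝ) (hU : IsOpen U) (hUI : Set.Icc (0:ℝ) h₀ ⊆ U)
    (hy : ∀ t ∈ U, HasDerivAt y (f (y t)) t)
    (p : FormalMultilinearSeries ℝ ℝ E) (r : ENNReal)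
    (hr : ENNReal.ofReal h₀ < r)
    (hg : HasFPowerSeriesOnBall (fun t : ℝ => f (y t)) p 0 r) (j : ℕ) :
    ∃ C > 0, ∀ h ∈ Set.Ioc (0:ℝ) h₀,
      ‖∫ τ in (0:ℝ)..1, legendreP j τ • f (y (τ * h))‖ ≤ C * h ^ j := by
  classical
  obtain ⟨M, hM⟩ : ∃ M, ∀ x ∈ Set.Icc (0:ℝ) 1, ‖legendreP j x‖ ≤ M :=
    (isCompact_Icc).exists_bound_of_continuousOn (legendreP_continuous j).continuousOn
  have hM0 : 0 ≤ M := le_trans (norm_nonneg _) (hM 0 (by norm_num))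
  -- summability of the power series coefficients at radius h₀
  have hr'r : (h₀.toNNReal : ENNReal) < p.radius := by
    have : ENNReal.ofReal h₀ = (h₀.toNNReal : ENNReal) := rfl
    exact this ▸ lt_of_lt_of_le hr hg.r_le
  have hS : Summable (fun n => ‖p n‖ * h₀ ^ n) := by
    have := p.summable_norm_mul_pow hr'r
    simpa [Real.coe_toNNReal _ hh₀.le] using this
  set S : ℝ := ∑' n, ‖p n‖ * h₀ ^ n with hSdef
  have hS0 : 0 ≤ S := tsum_nonneg fun n => by positivity
  have hcle : ∀ n, ‖p.coeff n‖ ≤ ‖p n‖ := fun n => by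
    simpa using (p n).le_opNorm 1
  refine ⟨M * S / h₀ ^ j + 1, by
    have : 0 ≤ M * S / h₀ ^ j := div_nonneg (mul_nonneg hM0 hS0) (pow_nonneg hh₀.le j)
    linarith, ?_⟩
  rintro h ⟨hh1, hh2⟩
  set F : ℕ → ℝ → E := fun k τ => (legendreP j τ * (τ * h) ^ k) • p.coeff k with hFdef
  -- pointwise expansion
  have hpt : ∀ τ ∈ Set.Ioc (0:ℝ) 1,
      HasSum (fun k => F k τ) (legendreP j τ • f (y (τ * h))) := by
    intro τ hτ
    have habs : |τ * h| ≤ h₀ := by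
      rw [abs_of_nonneg (mul_nonneg hτ.1.le hh1.le)]
      calc τ * h ≤ 1 * h₀ := mul_le_mul hτ.2 hh2 hh1.le (by norm_num)
      _ = h₀ := one_mul h₀
    have hmem : (τ * h : ℝ) ∈ Metric.eball (0:ℝ) r := by
      rw [Metric.mem_eball, edist_zero_right, ← ofReal_norm_eq_enorm]
      exact lt_of_le_of_lt (ENNReal.ofReal_le_ofReal (by rw [Real.norm_eq_abs]; exact habs)) hr
    have hsum := hg.hasSum hmem
    rw [zero_add] at hsum
    simp only [FormalMultilinearSeries.apply_eq_pow_smul_coeff] at hsum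
    have := hsum.const_smul (legendreP j τ)
    simpa [hFdef, smul_smul] using this
  have hFcont : ∀ k, Continuous (F k) := fun k =>
    (((legendreP_continuous j).mul ((continuous_id.mul continuous_const).pow k))).smul
      continuous_const
  have hInt : ∀ k, MeasureTheory.IntegrableOn (F k) (Set.Ioc (0:ℝ) 1) := fun k =>
    (hFcont k).integrableOn_Ioc
  -- norm bound on [0,1]
  have hFb : ∀ k, ∀ τ ∈ Set.Ioc (0:ℝ) 1, ‖F k τ‖ ≤ M * h ^ k * ‖p.coeff k‖ := by
    intro k τ hτ
    have h1 : |legendreP j τ| ≤ M := by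
      simpa [Real.norm_eq_abs] using hM τ ⟨hτ.1.le, hτ.2⟩
    have h2 : |τ * h| ≤ h := by
      rw [abs_of_nonneg (mul_nonneg hτ.1.le hh1.le)]
      exact mul_le_of_le_one_left hh1.le hτ.2
    calc ‖F k τ‖ = |legendreP j τ| * |τ * h| ^ k * ‖p.coeff k‖ := by
          rw [hFdef]; simp only [norm_smul, Real.norm_eq_abs, abs_mul, abs_pow]
    _ ≤ M * h ^ k * ‖p.coeff k‖ := by
          apply mul_le_mul_of_nonneg_right _ (norm_nonneg _)
          exact mul_le_mul h1 (pow_le_pow_left₀ (abs_nonneg _) h2 k)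
            (pow_nonneg (abs_nonneg _) k) hM0
  -- integral of the norm bound
  have hIb : ∀ k, (∫ τ in Set.Ioc (0:ℝ) 1, ‖F k τ‖) ≤ M * h ^ k * ‖p.coeff k‖ := by
    intro k
    have := MeasureTheory.setIntegral_mono_on (hInt k).norm
      (MeasureTheory.integrableOn_const (by simp))
      measurableSet_Ioc (fun τ hτ => hFb k τ hτ)
    simpa [Real.volume_Ioc] using this
  have hIb' : ∀ k, M * h ^ k * ‖p.coeff k‖ ≤ M * (‖p k‖ * h₀ ^ k) := by
    intro k
    calc M * h ^ k * ‖p.coeff k‖ ≤ M * h₀ ^ k * ‖p k‖ :=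
        mul_le_mul (mul_le_mul_of_nonneg_left
          (pow_le_pow_left₀ hh1.le hh2 k) hM0) (hcle k) (norm_nonneg _)
          (mul_nonneg hM0 (pow_nonneg hh₀.le k))
    _ = M * (‖p k‖ * h₀ ^ k) := by ring
  have hSum : Summable (fun k => ∫ τ in Set.Ioc (0:ℝ) 1, ‖F k τ‖) := by
    apply Summable.of_nonneg_of_le
      (fun k => MeasureTheory.integral_nonneg fun τ => norm_nonneg _)
      (fun k => (hIb k).trans (hIb' k)) (hS.mul_left M)
  have hHS := MeasureTheory.hasSum_integral_of_summable_integral_norm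
    (μ := MeasureTheory.volume.restrict (Set.Ioc (0:ℝ) 1)) hInt hSum
  have hγ : (∫ τ in (0:ℝ)..1, legendreP j τ • f (y (τ * h)))
      = ∑' k, ∫ τ in Set.Ioc (0:ℝ) 1, F k τ := by
    rw [intervalIntegral.integral_of_le (by norm_num : (0:ℝ) ≤ 1),
      MeasureTheory.setIntegral_congr_fun measurableSet_Ioc
        (fun τ hτ => ((hpt τ hτ).tsum_eq).symm : Set.EqOn _ (fun τ => ∑' k, F k τ) _)]
    exact hHS.tsum_eq.symm
  set a : ℕ → E := fun k => ∫ τ in Set.Ioc (0:ℝ) 1, F k τ with hadef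
  set b : ℕ → ℝ := fun k => (M / h₀ ^ j * (‖p k‖ * h₀ ^ k)) * h ^ j with hbdef
  have hb0 : ∀ k, 0 ≤ b k := fun k => by
    have : 0 ≤ M / h₀ ^ j := div_nonneg hM0 (pow_nonneg hh₀.le j)
    positivity
  have hab : ∀ k, ‖a k‖ ≤ b k := by
    intro k
    rcases lt_or_ge k j with hkj | hkj
    · -- orthogonality: a k = 0
      have : a k = 0 := by
        rw [hadef]
        simp only [hFdef]
        rw [← intervalIntegral.integral_of_le (by norm_num : (0:ℝ) ≤ 1),
          intervalIntegral.integral_smul_const]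
        have : (∫ τ in (0:ℝ)..1, legendreP j τ * (τ * h) ^ k) = 0 := by
          have : ∀ τ : ℝ, legendreP j τ * (τ * h) ^ k = legendreP j τ * τ ^ k * h ^ k := by
            intro τ; rw [mul_pow]; ring
          simp_rw [this]
          rw [intervalIntegral.integral_mul_const, legendreP_orth j k hkj, zero_mul]
        rw [this, zero_smul]
      rw [this, norm_zero]
      exact hb0 k
    · obtain ⟨d, rfl⟩ : ∃ d, k = j + d := ⟨k - j, by omega⟩
      have hak : ‖a (j + d)‖ ≤ M * h ^ (j + d) * ‖p.coeff (j + d)‖ :=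
        le_trans (MeasureTheory.norm_integral_le_integral_norm _) (hIb _)
      have hbk : b (j + d) = M * (‖p (j + d)‖ * h₀ ^ d) * h ^ j := by
        rw [hbdef]
        have hne : (h₀ : ℝ) ^ j ≠ 0 := pow_ne_zero j hh₀.ne'
        field_simp
        ring
      rw [hbk]
      calc ‖a (j + d)‖ ≤ M * h ^ (j + d) * ‖p.coeff (j + d)‖ := hak
      _ = M * ‖p.coeff (j + d)‖ * h ^ d * h ^ j := by rw [pow_add]; ring
      _ ≤ M * ‖p (j + d)‖ * h₀ ^ d * h ^ j := by
            apply mul_le_mul_of_nonneg_right _ (pow_nonneg hh1.le j)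
            exact mul_le_mul (mul_le_mul_of_nonneg_left (hcle _) hM0)
              (pow_le_pow_left₀ hh1.le hh2 d) (pow_nonneg hh1.le d)
              (mul_nonneg hM0 (norm_nonneg _))
      _ = M * (‖p (j + d)‖ * h₀ ^ d) * h ^ j := by ring
  have hbsum : Summable b := ((hS.mul_left (M / h₀ ^ j)).mul_right (h ^ j))
  have hasum : Summable (fun k => ‖a k‖) :=
    Summable.of_nonneg_of_le (fun k => norm_nonneg _) hab hbsum
  have htsumb : ∑' k, b k = (M / h₀ ^ j * S) * h ^ j := by
    rw [hbdef, tsum_mul_right, tsum_mul_left]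
  calc ‖∫ τ in (0:ℝ)..1, legendreP j τ • f (y (τ * h))‖ = ‖∑' k, a k‖ := by rw [hγ]
  _ ≤ ∑' k, ‖a k‖ := norm_tsum_le_tsum_norm hasum
  _ ≤ ∑' k, b k := Summable.tsum_le_tsum hab hasum hbsum
  _ = (M * S / h₀ ^ j) * h ^ j := by rw [htsumb]; ring
  _ ≤ (M * S / h₀ ^ j + 1) * h ^ j := by
        apply mul_le_mul_of_nonneg_right (by linarith) (pow_nonneg hh1.le j)
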